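/- Let f : X → X be a continuous map on a compact metric space, K ⊆ X a nonempty closed f-invariant subset, and φ : X → ℝ continuous. Suppose that for every x ∈ K, every ε > 0, and every N ∈ ℕ, the open set Δ(x, ε, N) := { y ∈ ball(x, ε) : ∃ n₁, n₂ ≥ N, (1/n₁)∑_{i<n₁} φ(f^i(y)) − (1/n₂)∑_{i<n₂} φ(f^i(y)) > 1/2 } intersects K. Then there is a residual subset R of K (with the subspace topology) such that every y ∈ R has historic behavior with respect to φ. -/

import Mathlib

open Filter Finset Metric

theorem stmt_3 {X : Type*} [MetricSpace X] [CompactSpace X]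
    (f : X → X) (hf : Continuous f) (φ : X → ℝ) (hφ : Continuous φ)
    (K : Set X) (hKne : K.Nonempty) (hKcl : IsClosed K) (hKinv : f '' K ⊆ K)
    (S : X → ℕ → ℝ)
    (hS : ∀ y n, S y n = (∑ i ∈ Finset.range n, φ (f^[i] y)) / n)
    (hdense : ∀ x ∈ K, ∀ ε > (0:ℝ), ∀ N : ℕ,
      ({y ∈ ball x ε | ∃ n₁ n₂ : ℕ, N ≤ n₁ ∧ N ≤ n₂ ∧ S y n₁ - S y n₂ > 1 / 2}
        ∩ K).Nonempty) :
    ∃ R : Set K, R ∈ residual K ∧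
      ∀ y ∈ R, ¬ ∃ L : ℝ, Tendsto (fun n => S (y : X) n) atTop (nhds L) := by
  have hScont : ∀ n, Continuous fun y : X => S y n := by
    intro n
    have : (fun y : X => S y n) = fun y => (∑ i ∈ Finset.range n, φ (f^[i] y)) / n := by
      funext y; exact hS y n
    rw [this]
    exact (continuous_finset_sum _ fun i _ => hφ.comp (hf.iterate i)).div_const _
  set U : ℕ → Set K := fun N =>
    {y : K | ∃ n₁ n₂ : ℕ, N ≤ n₁ ∧ N ≤ n₂ ∧ S (y : X) n₁ - S (y : X) n₂ > 1 / 2} with hU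
  have hUopen : ∀ N, IsOpen (U N) := by
    intro N
    have hEq : U N = ⋃ n₁, ⋃ n₂,
        {y : K | N ≤ n₁ ∧ N ≤ n₂ ∧ S (y : X) n₁ - S (y : X) n₂ > 1 / 2} := by
      ext y; simp [hU, Set.mem_iUnion]
    rw [hEq]
    refine isOpen_iUnion fun n₁ => isOpen_iUnion fun n₂ => ?_
    by_cases h1 : N ≤ n₁
    · by_cases h2 : N ≤ n₂
      · have : {y : K | N ≤ n₁ ∧ N ≤ n₂ ∧ S (y : X) n₁ - S (y : X) n₂ > 1 / 2}
            = (fun y : K => S (y : X) n₁ - S (y : X) n₂) ⁻¹' Set.Ioi (1 / 2) := by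
          ext y; simp [h1, h2]
        rw [this]
        exact (((hScont n₁).comp continuous_subtype_val).sub
          ((hScont n₂).comp continuous_subtype_val)).isOpen_preimage _ isOpen_Ioi
      · have : {y : K | N ≤ n₁ ∧ N ≤ n₂ ∧ S (y : X) n₁ - S (y : X) n₂ > 1 / 2} = ∅ := by
          ext y; simp [h2]
        rw [this]; exact isOpen_empty
    · have : {y : K | N ≤ n₁ ∧ N ≤ n₂ ∧ S (y : X) n₁ - S (y : X) n₂ > 1 / 2} = ∅ := by
        ext y; simp [h1]
      rw [this]; exact isOpen_empty
  have hUdense : ∀ N, Dense (U N) := by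
    intro N
    rw [Metric.dense_iff]
    intro z ε hε
    obtain ⟨y, ⟨hyball, hy⟩, hyK⟩ := hdense (z : X) z.2 ε hε N
    refine ⟨⟨y, hyK⟩, ?_, hy⟩
    rw [Metric.mem_ball, Subtype.dist_eq]
    rwa [Metric.mem_ball] at hyball
  refine ⟨⋂ N, U N, ?_, ?_⟩
  · exact countable_iInter_mem.2 fun N => residual_of_dense_open (hUopen N) (hUdense N)
  · rintro y hy ⟨L, hL⟩
    have := Metric.tendsto_atTop.1 hL (1/4) (by norm_num)
    obtain ⟨N, hN⟩ := this
    obtain ⟨n₁, n₂, h1, h2, h3⟩ := Set.mem_iInter.1 hy N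
    have d1 := hN n₁ h1
    have d2 := hN n₂ h2
    rw [Real.dist_eq] at d1 d2
    have e1 : S (y : X) n₁ - L < 1/4 := (abs_lt.1 d1).2
    have e2 : -(1/4) < S (y : X) n₂ - L := (abs_lt.1 d2).1
    linarith
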